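/- A pair (W,w) is a fusion frame for a closed subspace W of H with bounds A, B if and only if: (1) span of ∪_i W_i is dense in W, and (2) the synthesis operator T_{W,w} is well defined and bounded on K_W = ⊕_i W_i and satisfies A‖(f_i)‖² ≤ ‖T_{W,w}(f_i)‖² ≤ B‖(f_i)‖² for all (f_i) ∈ Ker(T_{W,w})⊥. -/

import Mathlib

set_option synthInstance.maxHeartbeats 1000000
set_option maxHeartbeats 4000000
set_option linter.unusedSectionVars false
set_option linter.unusedVariables false
set_option linter.unnecessarySimpa false

open scoped ENNReal InnerProductSpace ComplexConjugate NNReal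

section FusionFrameHelpers

variable {H : Type*} [NormedAddCommGroup H] [InnerProductSpace ℂ H] [CompleteSpace H]
  {I : Type*} {W : Submodule ℂ H} [CompleteSpace W]
  {Wi : I → Submodule ℂ H} [∀ i, CompleteSpace (Wi i)] {w : I → ℝ} {A B : ℝ}

private lemma ff_norm_sq_coord (c : lp (fun i => Wi i) 2) :
    Summable (fun i => ‖(c i : H)‖^2) ∧ ∑' i, ‖(c i : H)‖^2 = ‖c‖^2 := by
  have hmem := lp.memℓp c
  rw [memℓp_gen_iff (by norm_num : 0 < (2:ℝ≥0∞).toReal)] at hmem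
  have h : (fun i => ‖c i‖ ^ (2:ℝ≥0∞).toReal) = fun i => ‖(c i : H)‖^2 := by
    funext i
    rw [ENNReal.toReal_ofNat, Real.rpow_two]
    rfl
  rw [h] at hmem
  refine ⟨hmem, ?_⟩
  have h2 := lp.norm_rpow_eq_tsum (p := 2) (by norm_num) c
  rw [ENNReal.toReal_ofNat, Real.rpow_two] at h2
  rw [h2]
  refine tsum_congr fun i => ?_
  rw [Real.rpow_two]
  rfl

private lemma ff_exists_analysis (hWiW : ∀ i, Wi i ≤ W)
    (hBessel : ∀ f ∈ W, Summable
      (fun i => (w i)^2 * ‖(Submodule.orthogonalProjectionOnto (Wi i) f : H)‖^2)) :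
    ∃ U : H →ₗ[ℂ] lp (fun i => Wi i) 2,
      ∀ f, ∀ i, (U f i : H) = w i • (Submodule.orthogonalProjectionOnto (Wi i) f : H) := by
  have hproj : ∀ (f : H) (i : I),
      Submodule.orthogonalProjectionOnto (Wi i) ((Submodule.orthogonalProjectionOnto W f : H)) =
        Submodule.orthogonalProjectionOnto (Wi i) f := fun f i =>
    Submodule.orthogonalProjectionOnto_starProjection_of_le (hWiW i) f
  have hsummable : ∀ f : H, Summable
      (fun i => (w i)^2 * ‖(Submodule.orthogonalProjectionOnto (Wi i) f : H)‖^2) := by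
    intro f
    have := hBessel (Submodule.orthogonalProjectionOnto W f : H) (Submodule.orthogonalProjectionOnto W f).2
    simpa only [hproj] using this
  have hmem : ∀ f : H, Memℓp (fun i => w i • Submodule.orthogonalProjectionOnto (Wi i) f) 2 := by
    intro f
    apply memℓp_gen
    have : (fun i => ‖w i • Submodule.orthogonalProjectionOnto (Wi i) f‖ ^ (2:ℝ≥0∞).toReal)
        = fun i => (w i)^2 * ‖(Submodule.orthogonalProjectionOnto (Wi i) f : H)‖^2 := by
      funext i
      rw [norm_smul, ENNReal.toReal_ofNat, Real.rpow_two, mul_pow, Real.norm_eq_abs, sq_abs]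
      rfl
    rw [this]
    exact hsummable f
  refine ⟨{ toFun := fun f => ⟨fun i => w i • Submodule.orthogonalProjectionOnto (Wi i) f, hmem f⟩
            map_add' := ?_, map_smul' := ?_ }, fun f i => rfl⟩
  · intro f g
    apply lp.ext
    funext i
    simp [smul_add]
    rfl
  · intro a f
    apply lp.ext
    funext i
    show w i • (Submodule.orthogonalProjectionOnto (Wi i) (a • f)) = a • (w i • Submodule.orthogonalProjectionOnto (Wi i) f)
    rw [map_smul, smul_comm]

private lemma ff_norm_sq_eq {U : H →ₗ[ℂ] lp (fun i => Wi i) 2}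
    (hU : ∀ f, ∀ i, (U f i : H) = w i • (Submodule.orthogonalProjectionOnto (Wi i) f : H))
    (f : H) :
    ‖U f‖^2 = ∑' i, (w i)^2 * ‖(Submodule.orthogonalProjectionOnto (Wi i) f : H)‖^2 := by
  have h := lp.norm_rpow_eq_tsum (p := 2) (by norm_num) (U f)
  have h2 : ∀ i, ‖U f i‖ ^ (2:ℝ≥0∞).toReal
      = (w i)^2 * ‖(Submodule.orthogonalProjectionOnto (Wi i) f : H)‖^2 := by
    intro i
    rw [ENNReal.toReal_ofNat, Real.rpow_two]
    have : ‖U f i‖ = ‖(U f i : H)‖ := rfl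
    rw [this, hU f i, norm_smul, mul_pow, Real.norm_eq_abs, sq_abs]
  rw [ENNReal.toReal_ofNat, Real.rpow_two] at h
  rw [h]
  exact tsum_congr h2

private lemma ff_inner_eq {U : H →ₗ[ℂ] lp (fun i => Wi i) 2}
    (hU : ∀ f, ∀ i, (U f i : H) = w i • (Submodule.orthogonalProjectionOnto (Wi i) f : H))
    {TW : lp (fun i => Wi i) 2 →L[ℂ] H}
    (hTW : ∀ c, HasSum (fun i => w i • (c i : H)) (TW c))
    (c : lp (fun i => Wi i) 2) (f : H) :
    ⟪TW c, f⟫_ℂ = ⟪c, U f⟫_ℂ := by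
  have h1 : HasSum (fun i => ⟪f, w i • (c i : H)⟫_ℂ) ⟪f, TW c⟫_ℂ :=
    (hTW c).mapL (innerSL ℂ f)
  have h2 : HasSum (fun i => ⟪w i • (c i : H), f⟫_ℂ) ⟪TW c, f⟫_ℂ := by
    have := h1.star
    simpa only [RCLike.star_def, inner_conj_symm] using this
  have h3 : HasSum (fun i => ⟪c i, U f i⟫_ℂ) ⟪c, U f⟫_ℂ := lp.hasSum_inner c (U f)
  have h4 : ∀ i, ⟪c i, U f i⟫_ℂ = ⟪w i • (c i : H), f⟫_ℂ := by
    intro i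
    have hUf : U f i = (w i : ℂ) • (Submodule.orthogonalProjectionOnto (Wi i) f) := by
      apply Subtype.ext
      rw [hU f i]
      push_cast [Complex.coe_smul]
      rfl
    rw [hUf, inner_smul_right, Submodule.inner_orthogonalProjectionOnto_eq_of_mem_left,
      ← Complex.coe_smul, inner_smul_left, Complex.conj_ofReal]
  exact h2.unique (h3.congr_fun fun i => (h4 i).symm)

private lemma ff_finite_est (hWiW : ∀ i, Wi i ≤ W) (hw : ∀ i, 0 < w i) (hB : 0 ≤ B)
    (hup : ∀ f ∈ W, Summable
        (fun i => (w i)^2 * ‖(Submodule.orthogonalProjectionOnto (Wi i) f : H)‖^2)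
      ∧ ∑' i, (w i)^2 * ‖(Submodule.orthogonalProjectionOnto (Wi i) f : H)‖^2 ≤ B * ‖f‖^2)
    (c : lp (fun i => Wi i) 2) (t : Finset I) :
    ‖∑ i ∈ t, w i • (c i : H)‖^2 ≤ B * ∑ i ∈ t, ‖(c i : H)‖^2 := by
  set s : H := ∑ i ∈ t, w i • (c i : H) with hs
  have hsW : s ∈ W := Submodule.sum_mem _ fun i _ =>
    Submodule.smul_mem _ _ (hWiW i (c i).2)
  have hinner : (‖s‖:ℝ)^2 = RCLike.re (∑ i ∈ t, ⟪w i • (c i : H), s⟫_ℂ) := by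
    rw [← sum_inner, ← hs, ← @inner_self_eq_norm_sq ℂ]
  have hterm : ∀ i ∈ t, RCLike.re (⟪w i • (c i : H), s⟫_ℂ)
      ≤ ‖(c i : H)‖ * (w i * ‖(Submodule.orthogonalProjectionOnto (Wi i) s : H)‖) := by
    intro i _
    have h1 : ⟪w i • (c i : H), s⟫_ℂ
        = (w i : ℂ) * ⟪(c i : Wi i), Submodule.orthogonalProjectionOnto (Wi i) s⟫_ℂ := by
      rw [Submodule.inner_orthogonalProjectionOnto_eq_of_mem_left, ← Complex.coe_smul,
        inner_smul_left, Complex.conj_ofReal]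
    have h3 : RCLike.re ⟪(c i : Wi i), Submodule.orthogonalProjectionOnto (Wi i) s⟫_ℂ
        ≤ ‖(c i : Wi i)‖ * ‖Submodule.orthogonalProjectionOnto (Wi i) s‖ := re_inner_le_norm _ _
    have h2 : RCLike.re ((w i : ℂ) * ⟪(c i : Wi i), Submodule.orthogonalProjectionOnto (Wi i) s⟫_ℂ)
        = w i * RCLike.re ⟪(c i : Wi i), Submodule.orthogonalProjectionOnto (Wi i) s⟫_ℂ := by
      rw [show ((w i : ℂ) * ⟪(c i : Wi i), Submodule.orthogonalProjectionOnto (Wi i) s⟫_ℂ)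
          = w i • ⟪(c i : Wi i), Submodule.orthogonalProjectionOnto (Wi i) s⟫_ℂ by
        rw [← Complex.coe_smul, smul_eq_mul], RCLike.smul_re]
    rw [h1, h2]
    have := mul_le_mul_of_nonneg_left h3 (hw i).le
    calc w i * RCLike.re ⟪(c i : Wi i), Submodule.orthogonalProjectionOnto (Wi i) s⟫_ℂ
        ≤ w i * (‖(c i : Wi i)‖ * ‖Submodule.orthogonalProjectionOnto (Wi i) s‖) := this
      _ = ‖(c i : H)‖ * (w i * ‖(Submodule.orthogonalProjectionOnto (Wi i) s : H)‖) := by ring_nf; rfl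
  have hsum1 : (‖s‖:ℝ)^2 ≤ ∑ i ∈ t, ‖(c i : H)‖ * (w i * ‖(Submodule.orthogonalProjectionOnto (Wi i) s : H)‖) := by
    rw [hinner, map_sum]
    exact Finset.sum_le_sum hterm
  have hCS := Finset.sum_mul_sq_le_sq_mul_sq t (fun i => ‖(c i : H)‖)
    (fun i => w i * ‖(Submodule.orthogonalProjectionOnto (Wi i) s : H)‖)
  have hbes : ∑ i ∈ t, (w i * ‖(Submodule.orthogonalProjectionOnto (Wi i) s : H)‖)^2 ≤ B * ‖s‖^2 := by
    have h0 : ∀ i, (w i * ‖(Submodule.orthogonalProjectionOnto (Wi i) s : H)‖)^2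
        = (w i)^2 * ‖(Submodule.orthogonalProjectionOnto (Wi i) s : H)‖^2 := fun i => by ring
    simp_rw [h0]
    exact le_trans (Summable.sum_le_tsum t (fun i _ => by positivity) (hup s hsW).1) (hup s hsW).2
  set x := (‖s‖:ℝ)^2 with hx
  set P := ∑ i ∈ t, ‖(c i : H)‖ * (w i * ‖(Submodule.orthogonalProjectionOnto (Wi i) s : H)‖) with hP
  set Sa := ∑ i ∈ t, ‖(c i : H)‖^2 with hSa
  have hx0 : 0 ≤ x := sq_nonneg _
  have hSa0 : 0 ≤ Sa := Finset.sum_nonneg fun i _ => sq_nonneg _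
  have hP0 : 0 ≤ P := Finset.sum_nonneg fun i _ =>
    mul_nonneg (norm_nonneg _) (mul_nonneg (hw i).le (norm_nonneg _))
  have hkey : P^2 ≤ Sa * (B * x) := by
    calc P^2 ≤ Sa * ∑ i ∈ t, (w i * ‖(Submodule.orthogonalProjectionOnto (Wi i) s : H)‖)^2 := by
          simpa [hSa] using hCS
      _ ≤ Sa * (B * x) := mul_le_mul_of_nonneg_left hbes hSa0
  rcases eq_or_lt_of_le hx0 with h0 | hxpos
  · exact le_trans h0.symm.le (mul_nonneg hB hSa0)
  · have h5 : x * x ≤ P * P := mul_self_le_mul_self hx0 hsum1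
    have h6 : x * x ≤ (B * Sa) * x := by nlinarith [h5, hkey]
    exact le_of_mul_le_mul_right h6 hxpos

private lemma ff_exists_synthesis (hB : 0 ≤ B)
    (hEst : ∀ (c : lp (fun i => Wi i) 2) (t : Finset I),
      ‖∑ i ∈ t, w i • (c i : H)‖^2 ≤ B * ∑ i ∈ t, ‖(c i : H)‖^2) :
    ∃ TW : lp (fun i => Wi i) 2 →L[ℂ] H,
      (∀ c, HasSum (fun i => w i • (c i : H)) (TW c))
      ∧ ∀ c, ‖TW c‖^2 ≤ B * ‖c‖^2 := by
  have hsummable : ∀ c : lp (fun i => Wi i) 2,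
      Summable (fun i => w i • (c i : H)) := by
    intro c
    rw [summable_iff_vanishing]
    intro e he
    rcases Metric.mem_nhds_iff.1 he with ⟨ε, hε, hball⟩
    have hg := (ff_norm_sq_coord c).1
    rw [summable_iff_vanishing] at hg
    rcases hg (Metric.ball 0 (ε^2 / (B+1))) (Metric.ball_mem_nhds 0 (by positivity))
      with ⟨s, hs⟩
    refine ⟨s, fun t ht => ?_⟩
    apply hball
    rw [Metric.mem_ball, dist_zero_right]
    have h1 := hEst c t
    have h2 := hs t ht
    rw [Metric.mem_ball, dist_zero_right, Real.norm_eq_abs] at h2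
    have h3 : ∑ i ∈ t, ‖(c i : H)‖^2 < ε^2 / (B+1) :=
      lt_of_le_of_lt (le_abs_self _) h2
    have h4 : ‖∑ i ∈ t, w i • (c i : H)‖^2 < ε^2 := by
      calc ‖∑ i ∈ t, w i • (c i : H)‖^2 ≤ B * ∑ i ∈ t, ‖(c i : H)‖^2 := h1
        _ ≤ B * (ε^2 / (B+1)) := by
            apply mul_le_mul_of_nonneg_left (le_of_lt h3) hB
        _ = ε^2 * (B/(B+1)) := by ring
        _ < ε^2 * 1 := mul_lt_mul_of_pos_left
            ((div_lt_one (by linarith)).2 (by linarith)) (by positivity)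
        _ = ε^2 := mul_one _
    nlinarith [norm_nonneg (∑ i ∈ t, w i • (c i : H)), abs_nonneg ε]
  have hbound : ∀ c : lp (fun i => Wi i) 2,
      ‖∑' i, w i • (c i : H)‖ ≤ Real.sqrt B * ‖c‖ := by
    intro c
    have h := (hsummable c).hasSum
    have htend : Filter.Tendsto (fun t : Finset I => ‖∑ i ∈ t, w i • (c i : H)‖)
        Filter.atTop (nhds ‖∑' i, w i • (c i : H)‖) :=
      (continuous_norm.continuousAt.tendsto.comp h)
    refine le_of_tendsto' htend fun t => ?_
    have h1 := hEst c t
    have h2 : ∑ i ∈ t, ‖(c i : H)‖^2 ≤ ‖c‖^2 := by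
      rw [← (ff_norm_sq_coord c).2]
      exact Summable.sum_le_tsum t (fun i _ => sq_nonneg _) (ff_norm_sq_coord c).1
    have h3 : ‖∑ i ∈ t, w i • (c i : H)‖^2 ≤ (Real.sqrt B * ‖c‖)^2 := by
      rw [mul_pow, Real.sq_sqrt hB]
      exact le_trans h1 (mul_le_mul_of_nonneg_left h2 hB)
    have h4 : (0:ℝ) ≤ Real.sqrt B * ‖c‖ := by positivity
    calc ‖∑ i ∈ t, w i • (c i : H)‖
        = Real.sqrt (‖∑ i ∈ t, w i • (c i : H)‖^2) := (Real.sqrt_sq (norm_nonneg _)).symm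
      _ ≤ Real.sqrt ((Real.sqrt B * ‖c‖)^2) := Real.sqrt_le_sqrt h3
      _ = Real.sqrt B * ‖c‖ := Real.sqrt_sq h4
  set F : lp (fun i => Wi i) 2 →ₗ[ℂ] H :=
    { toFun := fun c => ∑' i, w i • (c i : H)
      map_add' := by
        intro c d
        show (∑' i, w i • (((c + d) i : Wi i) : H))
          = (∑' i, w i • ((c i : Wi i) : H)) + ∑' i, w i • ((d i : Wi i) : H)
        have h1 : (fun i => w i • (((c + d) i : Wi i) : H))
            = fun i => w i • (c i : H) + w i • (d i : H) := by
          funext i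
          rw [lp.coeFn_add]
          simp [smul_add]
        rw [h1]
        exact Summable.tsum_add (hsummable c) (hsummable d)
      map_smul' := by
        intro a c
        show (∑' i, w i • (((a • c) i : Wi i) : H))
          = a • ∑' i, w i • ((c i : Wi i) : H)
        have h1 : (fun i => w i • (((a • c) i : Wi i) : H))
            = fun i => a • (w i • (c i : H)) := by
          funext i
          rw [lp.coeFn_smul]
          show w i • ((a • (c i) : Wi i) : H) = a • (w i • (c i : H))
          rw [Submodule.coe_smul]
          rw [smul_comm]
        rw [h1]
        exact Summable.tsum_const_smul a (hsummable c) } with hF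
  refine ⟨F.mkContinuous (Real.sqrt B) hbound, fun c => ?_, fun c => ?_⟩
  · exact (hsummable c).hasSum
  · have h := hbound c
    have h2 : ‖F c‖^2 ≤ (Real.sqrt B * ‖c‖)^2 := by
      apply pow_le_pow_left₀ (norm_nonneg _) h
    rwa [mul_pow, Real.sq_sqrt hB] at h2

private lemma ff_density (hWiW : ∀ i, Wi i ≤ W) (hA : 0 < A)
    (hframe : ∀ f ∈ W, Summable
        (fun i => (w i)^2 * ‖(Submodule.orthogonalProjectionOnto (Wi i) f : H)‖^2)
      ∧ A * ‖f‖^2 ≤ ∑' i, (w i)^2 * ‖(Submodule.orthogonalProjectionOnto (Wi i) f : H)‖^2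
      ∧ ∑' i, (w i)^2 * ‖(Submodule.orthogonalProjectionOnto (Wi i) f : H)‖^2 ≤ B * ‖f‖^2) :
    (⨆ i, Wi i).topologicalClosure = W := by
  set V := (⨆ i, Wi i).topologicalClosure with hV
  have hWclosed : IsClosed (W : Set H) := (completeSpace_coe_iff_isComplete.1 ‹_›).isClosed
  have hVW : V ≤ W := Submodule.topologicalClosure_minimal _ (iSup_le hWiW) hWclosed
  refine le_antisymm hVW fun f hf => ?_
  haveI : CompleteSpace V := by
    exact (completeSpace_coe_iff_isComplete.2 ((⨆ i, Wi i).isClosed_topologicalClosure.isComplete))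
  set g : H := f - (Submodule.orthogonalProjectionOnto V f : H) with hg
  have hgW : g ∈ W := Submodule.sub_mem _ hf (hVW (Submodule.orthogonalProjectionOnto V f).2)
  have hgperp : g ∈ Vᗮ := Submodule.sub_starProjection_mem_orthogonal f
  have hproj0 : ∀ i, Submodule.orthogonalProjectionOnto (Wi i) g = 0 := fun i =>
    Submodule.orthogonalProjectionOnto_apply_of_mem_orthogonal
      (Submodule.orthogonal_le (le_trans (le_iSup Wi i) (Submodule.le_topologicalClosure _)) hgperp)
  have hzero : ∑' i, (w i)^2 * ‖(Submodule.orthogonalProjectionOnto (Wi i) g : H)‖^2 = 0 := by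
    have : ∀ i, (w i)^2 * ‖(Submodule.orthogonalProjectionOnto (Wi i) g : H)‖^2 = 0 := by
      intro i; rw [hproj0 i]; simp
    rw [tsum_congr this, tsum_zero]
  have hle := (hframe g hgW).2.1
  rw [hzero] at hle
  have hgnorm : ‖g‖^2 ≤ 0 := by nlinarith [sq_nonneg ‖g‖]
  have hg0 : g = 0 := by
    have := le_antisymm hgnorm (sq_nonneg _)
    simpa [pow_eq_zero_iff] using this
  have : f = (Submodule.orthogonalProjectionOnto V f : H) := by
    rw [hg] at hg0; linear_combination (norm := module) hg0
  rw [this]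
  exact (Submodule.orthogonalProjectionOnto V f).2

private lemma ff_lower_on_ker_perp (hWiW : ∀ i, Wi i ≤ W) (hA : 0 < A)
    {U : H →ₗ[ℂ] lp (fun i => Wi i) 2}
    (hU : ∀ f, ∀ i, (U f i : H) = w i • (Submodule.orthogonalProjectionOnto (Wi i) f : H))
    {TW : lp (fun i => Wi i) 2 →L[ℂ] H}
    (hTW : ∀ c, HasSum (fun i => w i • (c i : H)) (TW c))
    (hlow : ∀ f ∈ W, A * ‖f‖^2 ≤ ∑' i, (w i)^2 * ‖(Submodule.orthogonalProjectionOnto (Wi i) f : H)‖^2) :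
    ∀ c ∈ (LinearMap.ker (TW : lp (fun i => Wi i) 2 →ₗ[ℂ] H))ᗮ, A * ‖c‖^2 ≤ ‖TW c‖^2 := by
  set K := lp (fun i => Wi i) 2
  set R : Submodule ℂ K := LinearMap.range U with hR
  have hRperp : Rᗮ ≤ LinearMap.ker (TW : lp (fun i => Wi i) 2 →ₗ[ℂ] H) := by
    intro d hd
    rw [LinearMap.mem_ker]
    have hinner : ∀ f : H, ⟪TW d, f⟫_ℂ = 0 := by
      intro f
      rw [ff_inner_eq hU hTW]
      have h0 : ⟪U f, d⟫_ℂ = 0 := hd (U f) ⟨f, rfl⟩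
      rw [← inner_conj_symm, h0, map_zero]
    have := hinner (TW d)
    rwa [inner_self_eq_zero] at this
  have hsubset : ((LinearMap.ker (TW : lp (fun i => Wi i) 2 →ₗ[ℂ] H))ᗮ : Set K) ⊆
      {c : K | A * ‖c‖^2 ≤ ‖TW c‖^2} := by
    have h1 : (LinearMap.ker (TW : lp (fun i => Wi i) 2 →ₗ[ℂ] H))ᗮ ≤ Rᗮᗮ := Submodule.orthogonal_le hRperp
    rw [Submodule.orthogonal_orthogonal_eq_closure] at h1
    have hSclosed : IsClosed {c : K | A * ‖c‖^2 ≤ ‖TW c‖^2} := by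
      apply isClosed_le
      · fun_prop
      · fun_prop
    have hRS : (R : Set K) ⊆ {c : K | A * ‖c‖^2 ≤ ‖TW c‖^2} := by
      rintro _ ⟨f, rfl⟩
      have hUf : U f = U (Submodule.orthogonalProjectionOnto W f : H) := by
        apply lp.ext
        funext i
        apply Subtype.ext
        show (U f i : H) = (U (Submodule.orthogonalProjectionOnto W f : H) i : H)
        rw [hU, hU]
        congr 1
        exact congrArg _
          (Submodule.orthogonalProjectionOnto_starProjection_of_le (hWiW i) f).symm
      rw [hUf]
      set g : H := (Submodule.orthogonalProjectionOnto W f : H) with hgdef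
      have hgW : g ∈ W := (Submodule.orthogonalProjectionOnto W f).2
      show A * ‖U g‖^2 ≤ ‖TW (U g)‖^2
      have hlow' : A * ‖g‖^2 ≤ ‖U g‖^2 := by
        rw [ff_norm_sq_eq hU]
        exact hlow g hgW
      have hid : (‖U g‖^2 : ℝ) = RCLike.re ⟪TW (U g), g⟫_ℂ := by
        rw [ff_inner_eq hU hTW, inner_self_eq_norm_sq]
      have hCS : RCLike.re ⟪TW (U g), g⟫_ℂ ≤ ‖TW (U g)‖ * ‖g‖ := re_inner_le_norm _ _
      have h1 : ‖U g‖^2 ≤ ‖TW (U g)‖ * ‖g‖ := by rw [hid]; exact hCS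
      rcases eq_or_lt_of_le (norm_nonneg (U g)) with h0 | hu
      · rw [← h0]; simpa using sq_nonneg ‖TW (U g)‖
      · have h3 : ‖U g‖^2 * ‖U g‖^2 ≤ (‖TW (U g)‖ * ‖g‖) * (‖TW (U g)‖ * ‖g‖) :=
          mul_self_le_mul_self (sq_nonneg _) h1
        have h4 : A * (‖g‖^2 * ‖TW (U g)‖^2) ≤ ‖U g‖^2 * ‖TW (U g)‖^2 := by
          rw [← mul_assoc]
          exact mul_le_mul_of_nonneg_right hlow' (sq_nonneg _)
        nlinarith [mul_pos hu hu, hA.le, sq_nonneg (‖TW (U g)‖), sq_nonneg ‖g‖]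
    calc ((LinearMap.ker (TW : lp (fun i => Wi i) 2 →ₗ[ℂ] H))ᗮ : Set K) ⊆ (R.topologicalClosure : Set K) := h1
      _ = closure (R : Set K) := Submodule.topologicalClosure_coe R
      _ ⊆ {c : K | A * ‖c‖^2 ≤ ‖TW c‖^2} := closure_minimal hRS hSclosed
  exact fun c hc => hsubset hc

private lemma ff_global_upper {TW : lp (fun i => Wi i) 2 →L[ℂ] H} (hB : 0 ≤ B)
    (hbd : ∀ c ∈ (LinearMap.ker (TW : lp (fun i => Wi i) 2 →ₗ[ℂ] H))ᗮ, ‖TW c‖^2 ≤ B * ‖c‖^2) :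
    ∀ c, ‖TW c‖^2 ≤ B * ‖c‖^2 := by
  intro c
  haveI : CompleteSpace (LinearMap.ker (TW : lp (fun i => Wi i) 2 →ₗ[ℂ] H)) :=
    (ContinuousLinearMap.isClosed_ker TW).completeSpace_coe
  obtain ⟨k, hk, m, hm, hc⟩ :=
    Submodule.exists_add_mem_mem_orthogonal (K := LinearMap.ker (TW : lp (fun i => Wi i) 2 →ₗ[ℂ] H)) c
  have hTc : TW c = TW m := by
    rw [hc, map_add, (show TW k = 0 from LinearMap.mem_ker.1 hk), zero_add]
  have hnorm : ‖c‖^2 = ‖k‖^2 + ‖m‖^2 := by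
    rw [hc]
    have := norm_add_sq_eq_norm_sq_add_norm_sq_of_inner_eq_zero k m (hm k hk)
    nlinarith [this]
  have h1 := hbd m hm
  rw [hTc]
  calc ‖TW m‖^2 ≤ B * ‖m‖^2 := h1
    _ ≤ B * ‖c‖^2 := by
        apply mul_le_mul_of_nonneg_left _ hB
        rw [hnorm]
        nlinarith [sq_nonneg ‖k‖]

private lemma ff_bessel_of_TW (hw : ∀ i, 0 < w i) (hB : 0 ≤ B)
    {TW : lp (fun i => Wi i) 2 →L[ℂ] H}
    (hTW : ∀ c, HasSum (fun i => w i • (c i : H)) (TW c))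
    (hTWall : ∀ c, ‖TW c‖^2 ≤ B * ‖c‖^2) (f : H) :
    Summable (fun i => (w i)^2 * ‖(Submodule.orthogonalProjectionOnto (Wi i) f : H)‖^2)
    ∧ ∑' i, (w i)^2 * ‖(Submodule.orthogonalProjectionOnto (Wi i) f : H)‖^2 ≤ B * ‖f‖^2 := by
  classical
  set d : ∀ i, Wi i := fun i => w i • Submodule.orthogonalProjectionOnto (Wi i) f with hd
  have hpart : ∀ t : Finset I,
      ∑ i ∈ t, (w i)^2 * ‖(Submodule.orthogonalProjectionOnto (Wi i) f : H)‖^2 ≤ B * ‖f‖^2 := by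
    intro t
    set ct : lp (fun i => Wi i) 2 := ∑ i ∈ t, lp.single 2 i (d i) with hct
    set St := ∑ i ∈ t, (w i)^2 * ‖(Submodule.orthogonalProjectionOnto (Wi i) f : H)‖^2 with hSt
    have hST0 : 0 ≤ St := Finset.sum_nonneg fun i _ => by positivity
    have hctapp : ∀ j, ct j = if j ∈ t then d j else 0 := by
      intro j
      rw [hct]
      simp only [lp.coeFn_sum, Finset.sum_apply, lp.single_apply]
      simp [Finset.sum_dite_eq']
    have hctnorm : ‖ct‖^2 = St := by
      have h := lp.norm_sum_single (p := 2) (by norm_num) d t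
      rw [ENNReal.toReal_ofNat, Real.rpow_two] at h
      rw [hct, h, hSt]
      refine Finset.sum_congr rfl fun i _ => ?_
      rw [Real.rpow_two]
      show ‖(d i : H)‖^2 = _
      rw [hd]
      show ‖w i • (Submodule.orthogonalProjectionOnto (Wi i) f : H)‖^2 = _
      rw [norm_smul, mul_pow, Real.norm_eq_abs, sq_abs]
    have hTWct : TW ct = ∑ i ∈ t, w i • ((d i : Wi i) : H) := by
      have hfin : HasSum (fun j => w j • (ct j : H)) (∑ j ∈ t, w j • (ct j : H)) := by
        apply hasSum_sum_of_ne_finset_zero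
        intro j hj
        rw [hctapp j, if_neg hj]
        simp
      have := (hTW ct).unique hfin
      rw [this]
      refine Finset.sum_congr rfl fun i hi => ?_
      rw [hctapp i, if_pos hi]
    have hinner : RCLike.re ⟪TW ct, f⟫_ℂ = St := by
      rw [hTWct, sum_inner, map_sum, hSt]
      refine Finset.sum_congr rfl fun i _ => ?_
      have h1 : ((d i : Wi i) : H) = w i • (Submodule.orthogonalProjectionOnto (Wi i) f : H) := rfl
      have h2 : ⟪w i • ((d i : Wi i) : H), f⟫_ℂ
          = ((w i : ℂ) * (w i : ℂ)) * ⟪(Submodule.orthogonalProjectionOnto (Wi i) f : H), f⟫_ℂ := by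
        rw [h1, ← Complex.coe_smul, ← Complex.coe_smul, inner_smul_left, inner_smul_left]
        simp only [Complex.conj_ofReal]
        ring
      have h3 : ⟪(Submodule.orthogonalProjectionOnto (Wi i) f : H), f⟫_ℂ
          = ⟪Submodule.orthogonalProjectionOnto (Wi i) f, Submodule.orthogonalProjectionOnto (Wi i) f⟫_ℂ := by
        rw [Submodule.inner_orthogonalProjectionOnto_eq_of_mem_left]
      rw [h2, h3]
      have h4 : ((w i : ℂ) * (w i : ℂ))
          * ⟪Submodule.orthogonalProjectionOnto (Wi i) f, Submodule.orthogonalProjectionOnto (Wi i) f⟫_ℂ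
          = ((w i)^2 : ℝ) • ⟪Submodule.orthogonalProjectionOnto (Wi i) f, Submodule.orthogonalProjectionOnto (Wi i) f⟫_ℂ := by
        rw [← Complex.coe_smul, smul_eq_mul]
        push_cast
        ring
      rw [h4, RCLike.smul_re, inner_self_eq_norm_sq]
      rfl
    have hre : St ≤ ‖TW ct‖ * ‖f‖ := by
      rw [← hinner]
      exact (re_inner_le_norm _ _)
    have hup : ‖TW ct‖^2 ≤ B * St := by
      have := hTWall ct
      rwa [hctnorm] at this
    rcases eq_or_lt_of_le hST0 with h0 | hpos
    · rw [← h0]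
      positivity
    · have h5 : St * St ≤ (‖TW ct‖ * ‖f‖) * (‖TW ct‖ * ‖f‖) :=
        mul_self_le_mul_self hST0 hre
      have h6 : ‖TW ct‖^2 * ‖f‖^2 ≤ (B * St) * ‖f‖^2 :=
        mul_le_mul_of_nonneg_right hup (sq_nonneg _)
      have h7 : St * St ≤ (B * St) * ‖f‖^2 := by nlinarith [h5, h6]
      exact le_of_mul_le_mul_right (by nlinarith [h7] : St * St ≤ (B * ‖f‖^2) * St) hpos
  exact ⟨summable_of_sum_le (fun i => by positivity) hpart,
    Summable.tsum_le_of_sum_le (summable_of_sum_le (fun i => by positivity) hpart) hpart⟩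

private lemma ff_onto (hclos : (⨆ i, Wi i).topologicalClosure = W)
    (hw : ∀ i, 0 < w i) (hA : 0 < A)
    {TW : lp (fun i => Wi i) 2 →L[ℂ] H}
    (hTW : ∀ c, HasSum (fun i => w i • (c i : H)) (TW c))
    (hbdA : ∀ c ∈ (LinearMap.ker (TW : lp (fun i => Wi i) 2 →ₗ[ℂ] H))ᗮ, A * ‖c‖^2 ≤ ‖TW c‖^2) :
    ∀ f ∈ W, ∃ m : lp (fun i => Wi i) 2,
      m ∈ (LinearMap.ker (TW : lp (fun i => Wi i) 2 →ₗ[ℂ] H))ᗮ ∧ TW m = f := by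
  classical
  haveI hkercc : CompleteSpace (LinearMap.ker (TW : lp (fun i => Wi i) 2 →ₗ[ℂ] H)) :=
    (ContinuousLinearMap.isClosed_ker TW).completeSpace_coe
  haveI : CompleteSpace ((LinearMap.ker (TW : lp (fun i => Wi i) 2 →ₗ[ℂ] H))ᗮ) :=
    (Submodule.isClosed_orthogonal _).completeSpace_coe
  set T' : ((LinearMap.ker (TW : lp (fun i => Wi i) 2 →ₗ[ℂ] H))ᗮ : Submodule ℂ (lp (fun i => Wi i) 2)) →L[ℂ] H :=
    TW.comp (Submodule.subtypeL _) with hT'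
  have hanti : AntilipschitzWith (Real.toNNReal (Real.sqrt A))⁻¹ T' := by
    rw [antilipschitzWith_iff_le_mul_dist]
    intro x y
    rw [dist_eq_norm, dist_eq_norm]
    have hxy : T' x - T' y = TW ((x - y : (LinearMap.ker (TW : lp (fun i => Wi i) 2 →ₗ[ℂ] H))ᗮ) : lp (fun i => Wi i) 2) := by
      rw [hT']
      simp [map_sub]
    rw [hxy]
    have hz := hbdA ((x - y : (LinearMap.ker (TW : lp (fun i => Wi i) 2 →ₗ[ℂ] H))ᗮ) : lp (fun i => Wi i) 2) (x - y).2
    set z := ((x - y : (LinearMap.ker (TW : lp (fun i => Wi i) 2 →ₗ[ℂ] H))ᗮ) : lp (fun i => Wi i) 2)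
    have hsq : Real.sqrt A * ‖z‖ ≤ ‖TW z‖ := by
      have h1 : Real.sqrt (A * ‖z‖^2) ≤ Real.sqrt (‖TW z‖^2) := Real.sqrt_le_sqrt hz
      rw [Real.sqrt_mul hA.le, Real.sqrt_sq (norm_nonneg _), Real.sqrt_sq (norm_nonneg _)] at h1
      exact h1
    have hApos : (0:ℝ) < Real.sqrt A := Real.sqrt_pos.2 hA
    have hcoe : (((Real.toNNReal (Real.sqrt A))⁻¹ : NNReal) : ℝ) = (Real.sqrt A)⁻¹ := by
      rw [NNReal.coe_inv, Real.coe_toNNReal _ hApos.le]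
    have hzeq : ‖x - y‖ = ‖z‖ := rfl
    rw [hzeq, hcoe, inv_mul_eq_div, le_div_iff₀ hApos]
    linarith [hsq]
  have hclosedrange : IsClosed (Set.range T') :=
    hanti.isClosed_range T'.uniformContinuous
  have hWiRange : ∀ i, Wi i ≤ LinearMap.range (TW : lp (fun i => Wi i) 2 →ₗ[ℂ] H) := by
    intro i x hx
    set c : lp (fun i => Wi i) 2 := lp.single 2 i ((w i)⁻¹ • (⟨x, hx⟩ : Wi i)) with hc
    have h1 : HasSum (fun j => w j • (c j : H)) (w i • (c i : H)) := by
      apply hasSum_single (f := fun j => w j • (c j : H)) i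
      intro j hj
      rw [hc, lp.single_apply_ne 2 i _ hj]
      simp
    have h2 : w i • (c i : H) = x := by
      rw [hc, lp.single_apply_self]
      show w i • ((w i)⁻¹ • x) = x
      rw [smul_inv_smul₀ (hw i).ne']
    rw [h2] at h1
    exact ⟨c, ((hTW c).unique h1)⟩
  have hrange : ∀ y, y ∈ LinearMap.range (TW : lp (fun i => Wi i) 2 →ₗ[ℂ] H) → y ∈ Set.range T' := by
    rintro _ ⟨c, rfl⟩
    obtain ⟨k, hk, m, hm, hc⟩ :=
      Submodule.exists_add_mem_mem_orthogonal (K := LinearMap.ker (TW : lp (fun i => Wi i) 2 →ₗ[ℂ] H)) c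
    refine ⟨⟨m, hm⟩, ?_⟩
    show TW m = TW c
    rw [hc, map_add, (show TW k = 0 from LinearMap.mem_ker.1 hk), zero_add]
  have hWrange : (W : Set H) ⊆ Set.range T' := by
    rw [← hclos]
    have hsub : (⨆ i, Wi i) ≤ LinearMap.range (TW : lp (fun i => Wi i) 2 →ₗ[ℂ] H) := iSup_le hWiRange
    intro y hy
    have hclosure : y ∈ closure (((⨆ i, Wi i) : Submodule ℂ H) : Set H) := by
      rwa [← Submodule.topologicalClosure_coe]
    refine closure_minimal ?_ hclosedrange hclosure
    intro z hz
    exact hrange z (hsub (by exact_mod_cast hz))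
  intro f hf
  obtain ⟨m, hm⟩ := hWrange hf
  exact ⟨m.1, m.2, hm⟩

end FusionFrameHelpers

/-- Characterization of fusion frames: `(W_i,w_i)` is a fusion frame for the closed
subspace `W` with bounds `A, B` iff (1) the span of `⋃ᵢ Wᵢ` is dense in `W`, and
(2) the synthesis operator `T_W` is well defined and bounded on `K_W = ⊕ᵢ Wᵢ` and
satisfies `A‖c‖² ≤ ‖T_W c‖² ≤ B‖c‖²` for all `c ∈ (ker T_W)ᗮ`. -/
theorem fusion_frame_iff_synthesis_bounds
    {H : Type*} [NormedAddCommGroup H] [InnerProductSpace ℂ H] [CompleteSpace H]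
    {I : Type*} (W : Submodule ℂ H) [CompleteSpace W]
    (Wi : I → Submodule ℂ H) [∀ i, CompleteSpace (Wi i)] (hWiW : ∀ i, Wi i ≤ W)
    (w : I → ℝ) (hw : ∀ i, 0 < w i)
    (A B : ℝ) (hA : 0 < A) (hAB : A ≤ B) :
    (∀ f ∈ W,
      Summable (fun i => (w i) ^ 2 * ‖((Wi i).orthogonalProjectionOnto f : H)‖ ^ 2)
      ∧ A * ‖f‖ ^ 2 ≤ ∑' i, (w i) ^ 2 * ‖((Wi i).orthogonalProjectionOnto f : H)‖ ^ 2
      ∧ ∑' i, (w i) ^ 2 * ‖((Wi i).orthogonalProjectionOnto f : H)‖ ^ 2 ≤ B * ‖f‖ ^ 2)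
    ↔ ((⨆ i, Wi i).topologicalClosure = W
      ∧ ∃ TW : lp (fun i => Wi i) 2 →L[ℂ] H,
          (∀ c, HasSum (fun i => w i • (c i : H)) (TW c))
          ∧ ∀ c ∈ (LinearMap.ker (TW : lp (fun i => Wi i) 2 →ₗ[ℂ] H))ᗮ,
              A * ‖c‖ ^ 2 ≤ ‖TW c‖ ^ 2 ∧ ‖TW c‖ ^ 2 ≤ B * ‖c‖ ^ 2) := by
  have hB : (0:ℝ) ≤ B := le_trans hA.le hAB
  constructor
  · intro hframe
    have hdense := ff_density hWiW hA hframe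
    obtain ⟨TW, hTW, hTWb⟩ := ff_exists_synthesis hB
      (ff_finite_est hWiW hw hB (fun f hf => ⟨(hframe f hf).1, (hframe f hf).2.2⟩))
    obtain ⟨U, hU⟩ := ff_exists_analysis hWiW (fun f hf => (hframe f hf).1)
    exact ⟨hdense, TW, hTW, fun c hc =>
      ⟨ff_lower_on_ker_perp hWiW hA hU hTW (fun f hf => (hframe f hf).2.1) c hc, hTWb c⟩⟩
  · rintro ⟨hclos, TW, hTW, hbd⟩
    have hTWall := ff_global_upper hB (fun c hc => (hbd c hc).2)
    have hbes := ff_bessel_of_TW hw hB hTW hTWall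
    obtain ⟨U, hU⟩ := ff_exists_analysis hWiW (fun g hg => (hbes g).1)
    intro f hf
    refine ⟨(hbes f).1, ?_, (hbes f).2⟩
    obtain ⟨m, hm, hTm⟩ := ff_onto hclos hw hA hTW (fun c hc => (hbd c hc).1) f hf
    have hid : RCLike.re ⟪TW m, f⟫_ℂ = ‖f‖^2 := by
      rw [hTm]
      exact inner_self_eq_norm_sq f
    have h2 : RCLike.re ⟪TW m, f⟫_ℂ ≤ ‖m‖ * ‖U f‖ := by
      rw [ff_inner_eq hU hTW]
      exact re_inner_le_norm _ _
    have hAm : A * ‖m‖^2 ≤ ‖f‖^2 := by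
      have := (hbd m hm).1
      rwa [hTm] at this
    have hkey : A * ‖f‖^2 ≤ ‖U f‖^2 := by
      have hfu : ‖f‖^2 ≤ ‖m‖ * ‖U f‖ := by rw [← hid]; exact h2
      rcases eq_or_lt_of_le (norm_nonneg f) with h0 | hfpos
      · rw [← h0]; simpa using sq_nonneg ‖U f‖
      · have h3 : ‖f‖^2 * ‖f‖^2 ≤ (‖m‖ * ‖U f‖) * (‖m‖ * ‖U f‖) :=
          mul_self_le_mul_self (sq_nonneg _) hfu
        have h4 : A * (‖m‖^2 * ‖U f‖^2) ≤ ‖f‖^2 * ‖U f‖^2 := by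
          rw [← mul_assoc]
          exact mul_le_mul_of_nonneg_right hAm (sq_nonneg _)
        nlinarith [mul_pos hfpos hfpos, hA.le, sq_nonneg ‖U f‖, sq_nonneg ‖m‖]
    calc A * ‖f‖^2 ≤ ‖U f‖^2 := hkey
      _ = ∑' i, (w i)^2 * ‖(Submodule.orthogonalProjectionOnto (Wi i) f : H)‖^2 := ff_norm_sq_eq hU f
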